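/- Let q ≥ 1 be an integer, let a < b be real numbers, set τ = b − a, ζ_q = 1/(4(2q + 1)), λ = ζ_q/τ, fix θ ∈ ℝ, and define φ(t) = θ − λ(t − a). Let H be a real inner product space, let w be an H-valued polynomial of degree at most q − 1, and let g be an L²(a, b)-orthogonal projection of the function t ↦ φ(t)·w(t) onto H-valued polynomials of degree at most q − 1. Then ‖φ(a)w(a) − g(a)‖_H ≤ (1/(4·√(2q + 1)·√τ)) · (∫_a^b ‖w(t)‖_H² dt)^{1/2}. -/

import Mathlib

open MeasureTheory

/-- An `H`-valued polynomial of degree at most `k`: a function of the form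
`t ↦ ∑_{i=0}^{k} t^i • cᵢ` with coefficients `cᵢ ∈ H`. -/
def IsPolyDeg {H : Type*} [NormedAddCommGroup H] [InnerProductSpace ℝ H]
    (k : ℕ) (v : ℝ → H) : Prop :=
  ∃ c : ℕ → H, ∀ t : ℝ, v t = ∑ i ∈ Finset.range (k + 1), t ^ i • c i

/-- `g` is an `L²(a, b)`-orthogonal projection of `f` onto `H`-valued polynomials of
degree at most `k`. -/
def IsL2ProjOn {H : Type*} [NormedAddCommGroup H] [InnerProductSpace ℝ H]
    (a b : ℝ) (k : ℕ) (f g : ℝ → H) : Prop :=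
  IsPolyDeg k g ∧
    ∀ r : ℝ → H, IsPolyDeg k r →
      ∫ t in Set.Ioo a b, (inner ℝ (f t - g t) (r t) : ℝ) = 0

open Polynomial intervalIntegral

lemma beta_int (a b : ℝ) : ∀ (n m : ℕ),
    ∫ t in a..b, (t-a)^m * (b-t)^n
      = (m.factorial * n.factorial / (m+n+1).factorial : ℝ) * (b-a)^(m+n+1) := by
  intro n
  induction n with
  | zero =>
    intro m
    simp only [pow_zero, mul_one]
    have h := intervalIntegral.integral_comp_sub_right (a := a) (b := b) (fun x : ℝ => x^m) a
    rw [h, sub_self, integral_pow]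
    have hm0 : (m.factorial:ℝ) ≠ 0 := by positivity
    simp only [Nat.add_zero, Nat.factorial_zero, Nat.cast_one, mul_one]
    rw [Nat.factorial_succ]
    push_cast
    field_simp
    ring
  | succ n ih =>
    intro m
    have hderiv : ∀ t : ℝ, HasDerivAt (fun t : ℝ => (t-a)^(m+1) * (b-t)^(n+1))
        (((m:ℝ)+1) * ((t-a)^m * (b-t)^(n+1)) - ((n:ℝ)+1) * ((t-a)^(m+1) * (b-t)^n)) t := by
      intro t
      have h1 : HasDerivAt (fun t : ℝ => (t-a)^(m+1)) (((m:ℝ)+1) * (t-a)^m) t := by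
        simpa using (((hasDerivAt_id t).sub_const a).fun_pow (m+1))
      have h2 : HasDerivAt (fun t : ℝ => (b-t)^(n+1)) (-(((n:ℝ)+1) * (b-t)^n)) t := by
        simpa using (((hasDerivAt_id t).const_sub b).fun_pow (n+1))
      exact (h1.fun_mul h2).congr_deriv (by ring)
    have c1 : Continuous fun t : ℝ => (t-a)^m * (b-t)^(n+1) := by continuity
    have c2 : Continuous fun t : ℝ => (t-a)^(m+1) * (b-t)^n := by continuity
    have hint : ∫ t in a..b, (((m:ℝ)+1) * ((t-a)^m * (b-t)^(n+1)) - ((n:ℝ)+1) * ((t-a)^(m+1) * (b-t)^n))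
        = 0 := by
      rw [intervalIntegral.integral_eq_sub_of_hasDerivAt (fun t _ => hderiv t)]
      · simp
      · exact (((continuous_const.mul c1).sub (continuous_const.mul c2)).intervalIntegrable _ _)
    rw [intervalIntegral.integral_sub ((continuous_const.fun_mul c1).intervalIntegrable _ _)
      ((continuous_const.fun_mul c2).intervalIntegrable _ _), sub_eq_zero,
      intervalIntegral.integral_const_mul, intervalIntegral.integral_const_mul] at hint
    have hml : (m:ℝ)+1 ≠ 0 := by positivity
    have hm : (∫ t in a..b, (t-a)^m * (b-t)^(n+1))
        = (((n:ℝ)+1)/((m:ℝ)+1)) * ∫ t in a..b, (t-a)^(m+1) * (b-t)^n := by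
      field_simp
      linarith [hint]
    rw [hm, ih (m+1)]
    have e1 : m+1+n+1 = m+(n+1)+1 := by omega
    rw [e1]
    have h1 : ((m+(n+1)+1).factorial : ℝ) ≠ 0 := by positivity
    rw [Nat.factorial_succ m, Nat.factorial_succ n]
    push_cast
    field_simp

noncomputable def legS (q : ℕ) (a b : ℝ) : Polynomial ℝ := (X - C a)^q * (X - C b)^q
noncomputable def legL (q : ℕ) (a b : ℝ) : Polynomial ℝ := derivative^[q] (legS q a b)

lemma legS_def (q : ℕ) (a b : ℝ) : legS q a b = (X - C a)^q * (X - C b)^q := rfl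

lemma poly_ibp (a b : ℝ) (u v : Polynomial ℝ) (hua : u.eval a = 0) (hub : u.eval b = 0) :
    ∫ t in a..b, (derivative u).eval t * v.eval t
      = - ∫ t in a..b, u.eval t * (derivative v).eval t := by
  have h : ∫ t in a..b, (derivative (u*v)).eval t = (u*v).eval b - (u*v).eval a := by
    apply intervalIntegral.integral_eq_sub_of_hasDerivAt
    · intro x _; simpa using (u*v).hasDerivAt x
    · exact ((derivative (u*v)).continuous.intervalIntegrable _ _)
  rw [derivative_mul] at h
  simp only [eval_add, eval_mul, hua, hub, zero_mul, mul_zero, sub_zero] at h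
  have h2 : (∫ t in a..b, ((derivative u).eval t * v.eval t + u.eval t * (derivative v).eval t)) = 0 := by
    simpa using h
  rw [intervalIntegral.integral_add (((derivative u).continuous.fun_mul v.continuous).intervalIntegrable _ _)
    ((u.continuous.fun_mul (derivative v).continuous).intervalIntegrable _ _)] at h2
  linarith

lemma dvd_iterate_derivative {r : ℝ} {n : ℕ} {p : Polynomial ℝ} (h : (X - C r)^n ∣ p) (i : ℕ) :
    (X - C r)^(n - i) ∣ derivative^[i] p := by
  induction i generalizing n p with
  | zero => simpa using h
  | succ i ih =>
    rw [Function.iterate_succ_apply]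
    have h' : (X - C r)^(n-1) ∣ derivative p := by
      obtain ⟨R, rfl⟩ := h
      rw [derivative_mul, derivative_pow]
      rcases n with _ | m
      · simp
      · have h1 : (X - C r)^(m + 1 - 1) ∣ (C ((m:ℝ)+1) * (X - C r)^(m+1-1) * derivative (X - C r)) * R :=
          ⟨C ((m:ℝ)+1) * derivative (X - C r) * R, by push_cast; ring⟩
        have h2 : (X - C r)^(m + 1 - 1) ∣ (X - C r)^(m+1) * derivative R := by
          refine ⟨(X - C r) * derivative R, ?_⟩
          rw [show m + 1 - 1 = m by omega, ← mul_assoc, ← pow_succ]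
        exact dvd_add (by convert h1 using 2; push_cast; ring) h2
    have := ih h'
    rwa [show n - 1 - i = n - (i+1) by omega] at this

lemma legS_eval_zero (q : ℕ) (a b : ℝ) {i : ℕ} (hi : i < q) :
    (derivative^[i] (legS q a b)).eval a = 0 ∧ (derivative^[i] (legS q a b)).eval b = 0 := by
  have hij : q - i ≠ 0 := by omega
  constructor
  · obtain ⟨R, hR⟩ := dvd_iterate_derivative (r := a) (n := q)
      (⟨(X - C b)^q, legS_def q a b⟩ : (X - C a)^q ∣ legS q a b) i
    rw [hR]
    simp [eval_pow, zero_pow hij]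
  · obtain ⟨R, hR⟩ := dvd_iterate_derivative (r := b) (n := q)
      (⟨(X - C a)^q, by rw [legS_def]; ring⟩ : (X - C b)^q ∣ legS q a b) i
    rw [hR]
    simp [eval_pow, zero_pow hij]

lemma leg_ibp_full (q : ℕ) (a b : ℝ) (v : Polynomial ℝ) :
    ∫ t in a..b, (legL q a b).eval t * v.eval t
      = (-1:ℝ)^q * ∫ t in a..b, (legS q a b).eval t * (derivative^[q] v).eval t := by
  suffices h : ∀ j, j ≤ q → ∀ v : Polynomial ℝ,
      ∫ t in a..b, (legL q a b).eval t * v.eval t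
        = (-1:ℝ)^j * ∫ t in a..b, (derivative^[q-j] (legS q a b)).eval t * (derivative^[j] v).eval t by
    simpa using h q le_rfl v
  intro j
  induction j with
  | zero => intro _ v; simp [legL]
  | succ j ih =>
    intro hj v
    rw [ih (by omega) v]
    have hlt : q - j - 1 < q := by omega
    have hqj : q - j = (q - j - 1) + 1 := by omega
    have key : ∫ t in a..b, (derivative^[q-j] (legS q a b)).eval t * (derivative^[j] v).eval t
        = - ∫ t in a..b, (derivative^[q-(j+1)] (legS q a b)).eval t * (derivative^[j+1] v).eval t := by
      have h1 : derivative^[q-j] (legS q a b) = derivative (derivative^[q-j-1] (legS q a b)) := by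
        conv_lhs => rw [hqj]
        rw [Function.iterate_succ_apply']
      have h2 : q - (j+1) = q - j - 1 := by omega
      rw [h1, h2, poly_ibp a b _ _ (legS_eval_zero q a b hlt).1 (legS_eval_zero q a b hlt).2,
        Function.iterate_succ_apply']
    rw [key, pow_succ]
    ring

lemma leg_ortho (q : ℕ) (a b : ℝ) (v : Polynomial ℝ) (hv : v.natDegree < q) :
    ∫ t in a..b, (legL q a b).eval t * v.eval t = 0 := by
  rw [leg_ibp_full, iterate_derivative_eq_zero hv]
  simp

lemma legL_eval_a (q : ℕ) (a b : ℝ) :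
    (legL q a b).eval a = q.factorial * (a-b)^q := by
  rw [legL, legS_def, iterate_derivative_mul, eval_finset_sum]
  rw [Finset.sum_eq_single 0]
  · simp [iterate_derivative_X_sub_pow_self, eval_pow]
  · intro k hk hk0
    rw [iterate_derivative_X_sub_pow]
    have h1 : q - (q - k) = k := by
      simp only [Finset.mem_range] at hk; omega
    rw [h1]
    simp [zero_pow hk0, eval_pow]
  · simp

lemma legS_natDegree (q : ℕ) (a b : ℝ) : (legS q a b).natDegree = 2*q := by
  rw [legS_def, ← mul_pow, natDegree_pow, natDegree_mul (X_sub_C_ne_zero a) (X_sub_C_ne_zero b)]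
  simp [natDegree_X_sub_C]; ring

lemma legS_monic (q : ℕ) (a b : ℝ) : (legS q a b).Monic := by
  rw [legS_def, ← mul_pow]
  exact ((monic_X_sub_C a).mul (monic_X_sub_C b)).pow q

lemma legL_coeff_q (q : ℕ) (a b : ℝ) :
    (legL q a b).coeff q = ((2*q).descFactorial q : ℝ) := by
  rw [legL, coeff_iterate_derivative]
  have h : q + q = 2*q := by ring
  rw [h, ← legS_natDegree q a b, (legS_monic q a b).coeff_natDegree, legS_natDegree]
  simp

lemma legL_natDegree_le (q : ℕ) (a b : ℝ) : (legL q a b).natDegree ≤ q := by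
  have := natDegree_iterate_derivative (legS q a b) q
  rw [legS_natDegree] at this
  rw [legL]
  omega

lemma legL_sq_integral (q : ℕ) (a b : ℝ) :
    (2*(q:ℝ)+1) * ∫ t in a..b, ((legL q a b).eval t)^2
      = (b-a) * ((legL q a b).eval a)^2 := by
  set L := legL q a b with hL
  set ℓ : ℝ := L.coeff q with hℓ
  -- derivative^[q] of the remainder is zero
  have hr : derivative^[q] (L - C ℓ * X^q) = 0 := by
    by_cases h0 : L - C ℓ * X^q = 0
    · rw [h0]; simp
    · apply iterate_derivative_eq_zero
      rw [natDegree_lt_iff_degree_lt h0, degree_lt_iff_coeff_zero]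
      intro m hm
      have hqm : q ≤ m := by exact_mod_cast hm
      rcases eq_or_lt_of_le hqm with h | h
      · simp [coeff_sub, coeff_C_mul, coeff_X_pow, ← h, hℓ]
      · rw [coeff_sub, coeff_eq_zero_of_natDegree_lt (lt_of_le_of_lt (legL_natDegree_le q a b) h),
          coeff_C_mul, coeff_X_pow, if_neg (by omega)]
        simp
  have key1 : ∫ t in a..b, L.eval t * (L - C ℓ * X^q).eval t = 0 := by
    rw [hL, leg_ibp_full]
    rw [← hL, hr]
    simp
  have key2 : ∫ t in a..b, L.eval t * (t^q) = (-1:ℝ)^q * (q.factorial : ℝ) * ∫ t in a..b, (legS q a b).eval t := by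
    have h := leg_ibp_full q a b (X^q)
    rw [← hL] at h
    simp only [eval_pow, eval_X] at h
    rw [h]
    have hd : derivative^[q] (X^q : Polynomial ℝ) = C (q.factorial : ℝ) := by
      have := iterate_derivative_X_pow_eq_C_mul (R := ℝ) q q
      simpa [Nat.descFactorial_self] using this
    rw [hd]
    simp only [eval_C]
    rw [intervalIntegral.integral_mul_const]
    ring
  have key3 : ∫ t in a..b, (legS q a b).eval t
      = (-1:ℝ)^q * ((q.factorial * q.factorial / (2*q+1).factorial : ℝ) * (b-a)^(2*q+1)) := by
    have hcongr : ∀ t : ℝ, (legS q a b).eval t = (-1:ℝ)^q * ((t-a)^q * (b-t)^q) := by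
      intro t
      rw [legS_def]
      simp only [eval_mul, eval_pow, eval_sub, eval_X, eval_C]
      rw [show (t - b)^q = (-(b-t))^q by ring_nf, neg_pow]
      ring
    rw [intervalIntegral.integral_congr (fun t _ => hcongr t), intervalIntegral.integral_const_mul,
      beta_int a b q q]
    rw [show q + q + 1 = 2*q+1 from by ring]
  -- split ∫ L² 
  have cL : Continuous fun t : ℝ => L.eval t := L.continuous_aeval
  have split : ∫ t in a..b, (L.eval t)^2
      = ℓ * ∫ t in a..b, L.eval t * t^q := by
    have h2 : (fun t : ℝ => L.eval t * (L - C ℓ * X^q).eval t)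
        = fun t : ℝ => (L.eval t)^2 - ℓ * (L.eval t * t^q) := by
      ext t; simp [eval_sub, eval_mul, eval_pow]; ring
    rw [h2] at key1
    rw [intervalIntegral.integral_sub (by exact (cL.pow 2).intervalIntegrable _ _)
      (by exact (continuous_const.mul (cL.mul (continuous_pow q))).intervalIntegrable _ _),
      sub_eq_zero] at key1
    rw [key1, intervalIntegral.integral_const_mul]
  have hsign : ((-1:ℝ))^q * ((-1:ℝ))^q = 1 := by
    rw [← pow_add]
    exact Even.neg_one_pow ⟨q, rfl⟩
  have key23 : ∫ t in a..b, L.eval t * (t^q)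
      = (q.factorial : ℝ) * ((q.factorial * q.factorial / (2*q+1).factorial : ℝ)) * (b-a)^(2*q+1) := by
    rw [key2, key3]
    linear_combination ((q.factorial:ℝ) * ((q.factorial * q.factorial / (2*q+1).factorial : ℝ))
      * (b-a)^(2*q+1)) * hsign
  rw [split, key23, legL_eval_a]
  have hD : ((2*q).descFactorial q : ℝ) * (q.factorial : ℝ) = ((2*q).factorial : ℝ) := by
    have := Nat.factorial_mul_descFactorial (n := 2*q) (k := q) (by omega)
    have h2 : 2*q - q = q := by omega
    rw [h2] at this
    exact_mod_cast congrArg (Nat.cast : ℕ → ℝ) (by rw [mul_comm]; exact this)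
  have hfac : ((2*q+1).factorial : ℝ) = (2*(q:ℝ)+1) * ((2*q).factorial : ℝ) := by
    rw [Nat.factorial_succ]; push_cast; ring
  have hab2 : ((a-b)^q)^2 = (b-a)^(2*q) := by
    calc ((a-b)^q)^2 = (a-b)^(2*q) := by rw [← pow_mul, mul_comm q 2]
    _ = (-(b-a))^(2*q) := by rw [show a-b = -(b-a) from by ring]
    _ = (b-a)^(2*q) := Even.neg_pow (even_two_mul q) _
  have hfacne : ((2*q+1).factorial : ℝ) ≠ 0 := by positivity
  have hcancel : (2*(q:ℝ)+1) * ((2*q).descFactorial q : ℝ) * (q.factorial:ℝ) * (q.factorial:ℝ)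
      * (q.factorial:ℝ) / ((2*q+1).factorial : ℝ) = (q.factorial:ℝ) * (q.factorial:ℝ) := by
    rw [div_eq_iff hfacne, hfac]
    linear_combination ((2*(q:ℝ)+1) * ((q.factorial:ℝ) * (q.factorial:ℝ))) * hD
  rw [hℓ, legL_coeff_q, mul_pow, hab2]
  linear_combination ((b-a)^(2*q+1)) * hcancel

section Combinators
variable {H : Type*} [NormedAddCommGroup H] [InnerProductSpace ℝ H]

lemma IsPolyDeg.continuous {k : ℕ} {v : ℝ → H} (h : IsPolyDeg k v) : Continuous v := by
  obtain ⟨c, hc⟩ := h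
  have : v = fun t => ∑ i ∈ Finset.range (k + 1), t ^ i • c i := funext hc
  rw [this]
  exact continuous_finset_sum _ fun i _ => (continuous_pow i).smul continuous_const

lemma IsPolyDeg.mono {k m : ℕ} {v : ℝ → H} (h : IsPolyDeg k v) (hkm : k ≤ m) :
    IsPolyDeg m v := by
  obtain ⟨c, hc⟩ := h
  refine ⟨fun i => if i < k + 1 then c i else 0, fun t => ?_⟩
  have h1 : ∑ i ∈ Finset.range (k+1), t^i • c i
      = ∑ i ∈ Finset.range (k+1), t^i • (if i < k+1 then c i else 0) :=
    Finset.sum_congr rfl (fun i hi => by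
      rw [Finset.mem_range] at hi
      rw [if_pos hi])
  rw [hc t, h1]
  refine Finset.sum_subset (Finset.range_subset_range.mpr (by omega)) (fun x _ hnx => ?_)
  rw [Finset.mem_range] at hnx
  rw [if_neg hnx, smul_zero]

lemma IsPolyDeg.sub {k : ℕ} {v₁ v₂ : ℝ → H} (h₁ : IsPolyDeg k v₁) (h₂ : IsPolyDeg k v₂) :
    IsPolyDeg k (fun t => v₁ t - v₂ t) := by
  obtain ⟨c₁, hc₁⟩ := h₁
  obtain ⟨c₂, hc₂⟩ := h₂
  refine ⟨fun i => c₁ i - c₂ i, fun t => ?_⟩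
  simp only [hc₁ t, hc₂ t, smul_sub, Finset.sum_sub_distrib]

lemma IsPolyDeg.affine_smul {k : ℕ} {v : ℝ → H} (α β : ℝ) (h : IsPolyDeg k v) :
    IsPolyDeg (k + 1) (fun t => (α + β * t) • v t) := by
  obtain ⟨c, hc⟩ := h
  set cc : ℕ → H := fun i => if i < k + 1 then c i else 0 with hcc
  set cp : ℕ → H := fun i => match i with
    | 0 => 0
    | (j+1) => if j < k + 1 then c j else 0 with hcp
  refine ⟨fun i => α • cc i + β • cp i, fun t => ?_⟩
  have h1 : ∑ i ∈ Finset.range (k + 2), t ^ i • (α • cc i) = α • v t := by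
    rw [Finset.sum_range_succ, show cc (k+1) = 0 from if_neg (by omega), smul_zero, smul_zero,
      add_zero, hc t, Finset.smul_sum]
    exact Finset.sum_congr rfl fun i hi => by
      rw [Finset.mem_range] at hi
      rw [show cc i = c i from if_pos hi, smul_comm]
  have h2 : ∑ i ∈ Finset.range (k + 2), t ^ i • (β • cp i) = β • (t • v t) := by
    rw [Finset.sum_range_succ']
    have hz : t ^ 0 • (β • cp 0) = 0 := by simp [hcp]
    rw [hz, add_zero, hc t, Finset.smul_sum, Finset.smul_sum]
    refine Finset.sum_congr rfl fun i hi => ?_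
    rw [Finset.mem_range] at hi
    have : cp (i + 1) = c i := if_pos hi
    rw [this, pow_succ]
    rw [smul_comm (t^i * t) β, mul_smul, smul_comm t (t^i), smul_comm (t^i) t]
  calc (α + β * t) • v t = α • v t + β • (t • v t) := by
        rw [add_smul, mul_smul]
      _ = ∑ i ∈ Finset.range (k + 2), (t ^ i • (α • cc i) + t ^ i • (β • cp i)) := by
        rw [Finset.sum_add_distrib, h1, h2]
      _ = ∑ i ∈ Finset.range (k + 1 + 1), t ^ i • (α • cc i + β • cp i) := by
        exact Finset.sum_congr rfl fun i _ => (smul_add _ _ _).symm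

end Combinators

lemma ioo_eq_interval (a b : ℝ) (hab : a ≤ b) (f : ℝ → ℝ) :
    ∫ t in Set.Ioo a b, f t = ∫ t in a..b, f t := by
  rw [intervalIntegral.integral_of_le hab, MeasureTheory.integral_Ioc_eq_integral_Ioo]

lemma cont_integrableOn {E : Type*} [NormedAddCommGroup E] {f : ℝ → E}
    (hf : Continuous f) (a b : ℝ) : IntegrableOn f (Set.Ioo a b) := by
  exact (hf.integrableOn_Icc).mono_set Set.Ioo_subset_Icc_self

lemma key_scalar (q : ℕ) (a b : ℝ) (hab : a < b) (p : Polynomial ℝ)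
    (hdeg : p.natDegree ≤ q)
    (horth : ∀ j < q, ∫ t in Set.Ioo a b, p.eval t * t^j = 0) (t : ℝ) :
    (legL q a b).coeff q * p.eval t = p.coeff q * (legL q a b).eval t := by
  set L := legL q a b with hL
  set ℓ : ℝ := L.coeff q with hℓ
  set d : Polynomial ℝ := C ℓ * p - C (p.coeff q) * L with hd
  suffices hd0 : d = 0 by
    have := congrArg (Polynomial.eval t) hd.symm
    rw [hd0] at this
    simp only [eval_zero, eval_sub, eval_mul, eval_C] at this
    linarith
  by_cases hdz : d = 0
  · exact hdz
  -- degree of d is < q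
  have hddeg : d.natDegree < q ∨ d = 0 := by
    left
    rw [natDegree_lt_iff_degree_lt hdz, degree_lt_iff_coeff_zero]
    intro m hm
    have hqm : q ≤ m := by exact_mod_cast hm
    rcases eq_or_lt_of_le hqm with h | h
    · simp [hd, coeff_sub, coeff_C_mul, ← h, hℓ, mul_comm]
    · rw [hd]
      rw [coeff_sub, coeff_C_mul, coeff_C_mul,
        coeff_eq_zero_of_natDegree_lt (lt_of_le_of_lt hdeg h),
        coeff_eq_zero_of_natDegree_lt (lt_of_le_of_lt (legL_natDegree_le q a b) h)]
      simp
  have hdlt : d.natDegree < q := hddeg.resolve_right hdz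
  -- d is orthogonal to monomials of degree < q
  have hd_orth : ∀ j < q, ∫ t in Set.Ioo a b, d.eval t * t^j = 0 := by
    intro j hj
    have hLj : ∫ t in Set.Ioo a b, L.eval t * t^j = 0 := by
      rw [ioo_eq_interval a b hab.le]
      have := leg_ortho q a b (X^j) (by rw [natDegree_X_pow]; exact hj)
      simpa using this
    have hint : ∀ t : ℝ, d.eval t * t^j = ℓ * (p.eval t * t^j) - p.coeff q * (L.eval t * t^j) := by
      intro t; rw [hd]; simp only [eval_sub, eval_mul, eval_C]; ring
    rw [show (fun t => d.eval t * t^j) = fun t => ℓ * (p.eval t * t^j) - p.coeff q * (L.eval t * t^j)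
      from funext hint]
    have i1 : IntegrableOn (fun t : ℝ => ℓ * (p.eval t * t^j)) (Set.Ioo a b) :=
      cont_integrableOn (continuous_const.mul (p.continuous.mul (continuous_pow j))) a b
    have i2 : IntegrableOn (fun t : ℝ => p.coeff q * (L.eval t * t^j)) (Set.Ioo a b) :=
      cont_integrableOn (continuous_const.mul (L.continuous.mul (continuous_pow j))) a b
    rw [MeasureTheory.integral_sub i1 i2, MeasureTheory.integral_const_mul,
      MeasureTheory.integral_const_mul, horth j hj, hLj]
    ring
  -- hence ∫ d² = 0
  have hsum : ∀ s : ℝ, d.eval s * d.eval s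
      = ∑ j ∈ Finset.range q, d.coeff j * (d.eval s * s^j) := by
    intro s
    nth_rewrite 2 [eval_eq_sum_range' hdlt s]
    rw [Finset.mul_sum]
    exact Finset.sum_congr rfl fun j _ => by ring
  have hd2 : ∫ s in Set.Ioo a b, d.eval s * d.eval s = 0 := by
    rw [show (fun s => d.eval s * d.eval s)
        = fun s => ∑ j ∈ Finset.range q, d.coeff j * (d.eval s * s^j) from funext hsum]
    rw [MeasureTheory.integral_finset_sum]
    · refine Finset.sum_eq_zero fun j hj => ?_
      rw [Finset.mem_range] at hj
      rw [MeasureTheory.integral_const_mul, hd_orth j hj, mul_zero]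
    · intro j _
      exact cont_integrableOn (continuous_const.mul (d.continuous.mul (continuous_pow j))) a b
  -- d vanishes on Ioo a b
  have hae : (fun s => d.eval s * d.eval s) =ᵐ[volume.restrict (Set.Ioo a b)] 0 := by
    rw [← MeasureTheory.integral_eq_zero_iff_of_nonneg (fun s => mul_self_nonneg _)
      (cont_integrableOn (d.continuous.mul d.continuous) a b)]
    exact hd2
  have heqon := MeasureTheory.Measure.eqOn_Ioo_of_ae_eq (μ := volume) hae
    ((d.continuous.mul d.continuous).continuousOn) (continuousOn_const)
  exfalso
  apply hdz
  refine Polynomial.eq_zero_of_infinite_isRoot d (Set.Infinite.mono ?_ (Set.Ioo_infinite hab))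
  intro s hs
  have := heqon hs
  simp only [Pi.zero_apply] at this
  exact mul_self_eq_zero.mp this

/-- Pointwise bound at `t = a` for the projection error of `φ·w`, where
`φ(t) = θ − λ(t − a)` with `λ = ζ_q/τ`, `ζ_q = 1/(4(2q+1))`, `τ = b − a`, and `w` an
`H`-valued polynomial of degree at most `q − 1`. -/
theorem weighted_projection_left_value_bound {H : Type*} [NormedAddCommGroup H]
    [InnerProductSpace ℝ H]
    (q : ℕ) (hq : 1 ≤ q) (a b : ℝ) (hab : a < b)
    (τ ζq lam θ : ℝ) (hτ : τ = b - a)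
    (hζ : ζq = 1 / (4 * (2 * (q : ℝ) + 1))) (hlam : lam = ζq / τ)
    (φ : ℝ → ℝ) (hφ : ∀ t : ℝ, φ t = θ - lam * (t - a))
    (w g : ℝ → H) (hw : IsPolyDeg (q - 1) w)
    (hg : IsL2ProjOn a b (q - 1) (fun t => φ t • w t) g) :
    ‖φ a • w a - g a‖ ≤
      (1 / (4 * Real.sqrt (2 * (q : ℝ) + 1) * Real.sqrt τ)) *
        Real.sqrt (∫ t in Set.Ioo a b, ‖w t‖ ^ 2) := by
  have hτpos : 0 < τ := by rw [hτ]; linarith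
  have hq1 : q - 1 + 1 = q := Nat.succ_pred_eq_of_pos hq
  have h2q : (0:ℝ) < 2*(q:ℝ)+1 := by positivity
  have hζpos : 0 < ζq := by rw [hζ]; positivity
  have hlampos : 0 < lam := by rw [hlam]; positivity
  set L := legL q a b with hLdef
  set e : ℝ → H := fun t => φ t • w t - g t with he
  -- e is a polynomial of degree ≤ q
  have hφw : IsPolyDeg q (fun t => φ t • w t) := by
    have h := IsPolyDeg.affine_smul (θ + lam*a) (-lam) hw
    rw [hq1] at h
    have hfun : (fun t => φ t • w t) = fun t => ((θ + lam*a) + (-lam)*t) • w t := by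
      funext t
      rw [hφ t]
      congr 1
      ring
    rw [hfun]
    exact h
  have hePoly : IsPolyDeg q e := hφw.sub (hg.1.mono (by omega))
  obtain ⟨ce, hce⟩ := hePoly
  have he_orth : ∀ r : ℝ → H, IsPolyDeg (q-1) r →
      ∫ t in Set.Ioo a b, (inner ℝ (e t) (r t) : ℝ) = 0 := hg.2
  -- scalar projection: for all h, the scalar poly ⟪e ·, h⟫ is proportional to L
  have hkey : ∀ h : H, ∀ t : ℝ,
      L.coeff q * (inner ℝ (e t) h : ℝ) = (inner ℝ (ce q) h : ℝ) * L.eval t := by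
    intro h
    set p : Polynomial ℝ := ∑ i ∈ Finset.range (q+1), C (inner ℝ (ce i) h : ℝ) * X^i with hp
    have hpeval : ∀ t : ℝ, p.eval t = (inner ℝ (e t) h : ℝ) := by
      intro t
      rw [hce t, sum_inner, hp, eval_finset_sum]
      exact Finset.sum_congr rfl fun i _ => by
        rw [eval_mul, eval_C, eval_pow, eval_X, real_inner_smul_left]
        ring
    have hpcoeff : p.coeff q = (inner ℝ (ce q) h : ℝ) := by
      rw [hp, finset_sum_coeff]
      rw [Finset.sum_eq_single q (fun i _ hi => by
          rw [coeff_C_mul, coeff_X_pow, if_neg (fun hh => hi hh.symm), mul_zero])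
        (fun hq' => absurd (Finset.self_mem_range_succ q) hq')]
      rw [coeff_C_mul, coeff_X_pow, if_pos rfl, mul_one]
    have hpdeg : p.natDegree ≤ q := by
      rw [hp]
      apply natDegree_sum_le_of_forall_le
      intro i hi
      rw [Finset.mem_range] at hi
      exact le_trans (natDegree_C_mul_X_pow_le _ _) (by omega)
    have hporth : ∀ j, j < q → ∫ t in Set.Ioo a b, p.eval t * t^j = 0 := by
      intro j hj
      have hr : IsPolyDeg (q-1) (fun t : ℝ => t^j • h) := by
        refine ⟨fun i => if i = j then h else 0, fun t => ?_⟩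
        rw [hq1]
        rw [Finset.sum_eq_single j (fun i _ hi => by simp only [if_neg hi, smul_zero])
          (fun hj' => absurd (Finset.mem_range.mpr hj) hj')]
        simp
      have h0 := he_orth _ hr
      have hcongr : ∀ t : ℝ, (inner ℝ (e t) (t^j • h) : ℝ) = p.eval t * t^j := by
        intro t
        rw [real_inner_smul_right, hpeval t]
        ring
      rw [← h0]
      exact MeasureTheory.setIntegral_congr_fun measurableSet_Ioo (fun t _ => (hcongr t).symm)
    intro t
    have hks := key_scalar q a b hab p hpdeg hporth t
    rw [hpeval t, hpcoeff] at hks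
    exact hks
  -- the coefficient is nonzero
  have hℓne : L.coeff q ≠ 0 := by
    rw [hLdef, legL_coeff_q]
    have : (2*q).descFactorial q ≠ 0 := by
      rw [Ne, Nat.descFactorial_eq_zero_iff_lt]
      omega
    exact_mod_cast this
  set c : H := (L.coeff q)⁻¹ • ce q with hc
  have he_eq : ∀ t : ℝ, e t = L.eval t • c := by
    intro t
    have hall : ∀ h : H, (inner ℝ (L.coeff q • e t - L.eval t • ce q) h : ℝ) = 0 := by
      intro h
      rw [inner_sub_left, real_inner_smul_left, real_inner_smul_left, hkey h t]
      ring
    have h0 : L.coeff q • e t - L.eval t • ce q = 0 :=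
      inner_self_eq_zero.mp (hall (L.coeff q • e t - L.eval t • ce q))
    have h1 : L.coeff q • e t = L.eval t • ce q := sub_eq_zero.mp h0
    have h2 : e t = (L.coeff q)⁻¹ • (L.coeff q • e t) := (inv_smul_smul₀ hℓne _).symm
    rw [h2, h1, hc, smul_comm]
  -- continuity
  have hwCont : Continuous w := hw.continuous
  have heCont : Continuous e := by
    rw [show e = fun t => L.eval t • c from funext he_eq]
    exact L.continuous.smul continuous_const
  have hgCont : Continuous g := hg.1.continuous
  -- energy identity
  have h_ew : ∫ t in Set.Ioo a b, (inner ℝ (e t) (w t) : ℝ) = 0 := he_orth w hw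
  have h_eg : ∫ t in Set.Ioo a b, (inner ℝ (e t) (g t) : ℝ) = 0 := he_orth g hg.1
  have hiew : Continuous fun t => (inner ℝ (e t) (w t) : ℝ) := heCont.inner hwCont
  have hieg : Continuous fun t => (inner ℝ (e t) (g t) : ℝ) := heCont.inner hgCont
  have hitw : Continuous fun t : ℝ => (t - a) * (inner ℝ (e t) (w t) : ℝ) :=
    (continuous_id.sub continuous_const).mul hiew
  have hEident : ∫ t in Set.Ioo a b, ‖e t‖^2
      = - lam * ∫ t in Set.Ioo a b, (t - a) * (inner ℝ (e t) (w t) : ℝ) := by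
    have hfun : ∀ t : ℝ, ‖e t‖^2
        = θ * (inner ℝ (e t) (w t) : ℝ) - lam * ((t-a) * (inner ℝ (e t) (w t) : ℝ))
          - (inner ℝ (e t) (g t) : ℝ) := by
      intro t
      have h1 : (‖e t‖:ℝ)^2 = (inner ℝ (e t) (e t) : ℝ) := (real_inner_self_eq_norm_sq _).symm
      have h2 : e t = φ t • w t - g t := rfl
      rw [h1]
      nth_rewrite 2 [h2]
      rw [inner_sub_right, real_inner_smul_right, hφ t]
      ring
    rw [show (fun t => (‖e t‖:ℝ)^2) = fun t =>
        θ * (inner ℝ (e t) (w t) : ℝ) - lam * ((t-a) * (inner ℝ (e t) (w t) : ℝ))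
          - (inner ℝ (e t) (g t) : ℝ) from funext hfun]
    rw [MeasureTheory.integral_sub (((continuous_const.fun_mul hiew).fun_sub
        (continuous_const.fun_mul hitw)).integrableOn_Icc.mono_set Set.Ioo_subset_Icc_self)
      (hieg.integrableOn_Icc.mono_set Set.Ioo_subset_Icc_self)]
    rw [MeasureTheory.integral_sub
      ((continuous_const.fun_mul hiew).integrableOn_Icc.mono_set Set.Ioo_subset_Icc_self)
      ((continuous_const.fun_mul hitw).integrableOn_Icc.mono_set Set.Ioo_subset_Icc_self)]
    rw [MeasureTheory.integral_const_mul, MeasureTheory.integral_const_mul, h_ew, h_eg]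
    ring
  -- energy bound
  have hEbound : ∫ t in Set.Ioo a b, ‖e t‖^2 ≤ (lam * τ)^2 * ∫ t in Set.Ioo a b, ‖w t‖^2 := by
    have hptw : ∀ t ∈ Set.Ioo a b,
        - lam * ((t - a) * (inner ℝ (e t) (w t) : ℝ))
          ≤ ‖e t‖^2 / 2 + (lam*τ)^2 * ‖w t‖^2 / 2 := by
      intro t ht
      obtain ⟨hta, htb⟩ := ht
      have h1 : |(inner ℝ (e t) (w t) : ℝ)| ≤ ‖e t‖ * ‖w t‖ := abs_real_inner_le_norm _ _
      have h2 : - (inner ℝ (e t) (w t) : ℝ) ≤ ‖e t‖ * ‖w t‖ := by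
        have := neg_abs_le (inner ℝ (e t) (w t) : ℝ)
        linarith
      have h3 : 0 ≤ t - a := by linarith
      have h4 : t - a ≤ τ := by rw [hτ]; linarith
      have h5 : - lam * ((t - a) * (inner ℝ (e t) (w t) : ℝ))
          ≤ lam * ((t-a) * (‖e t‖ * ‖w t‖)) := by
        have := mul_le_mul_of_nonneg_left h2 (mul_nonneg hlampos.le h3)
        nlinarith
      have h6 : lam * ((t-a) * (‖e t‖ * ‖w t‖)) ≤ lam * τ * (‖e t‖ * ‖w t‖) := by
        have hn : 0 ≤ ‖e t‖ * ‖w t‖ := mul_nonneg (norm_nonneg _) (norm_nonneg _)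
        nlinarith [mul_nonneg (mul_nonneg hlampos.le (sub_nonneg.mpr h4)) hn]
      have h7 : lam * τ * (‖e t‖ * ‖w t‖) ≤ ‖e t‖^2 / 2 + (lam*τ)^2 * ‖w t‖^2 / 2 := by
        nlinarith [sq_nonneg (‖e t‖ - lam * τ * ‖w t‖)]
      linarith
    have hI1 : IntegrableOn (fun t : ℝ => - lam * ((t - a) * (inner ℝ (e t) (w t) : ℝ)))
        (Set.Ioo a b) :=
      ((continuous_const.mul hitw).integrableOn_Icc.mono_set Set.Ioo_subset_Icc_self)
    have hc2 : Continuous (fun t : ℝ => ‖e t‖^2 / 2 + (lam*τ)^2 * ‖w t‖^2 / 2) :=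
      ((heCont.norm.pow 2).div_const 2).add
        ((continuous_const.mul (hwCont.norm.pow 2)).div_const 2)
    have hI2 : IntegrableOn (fun t : ℝ => ‖e t‖^2 / 2 + (lam*τ)^2 * ‖w t‖^2 / 2)
        (Set.Ioo a b) := hc2.integrableOn_Icc.mono_set Set.Ioo_subset_Icc_self
    have hmono := MeasureTheory.setIntegral_mono_on hI1 hI2 measurableSet_Ioo hptw
    have hsplit : ∫ t in Set.Ioo a b, (‖e t‖^2 / 2 + (lam*τ)^2 * ‖w t‖^2 / 2)
        = (∫ t in Set.Ioo a b, ‖e t‖^2) / 2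
          + (lam*τ)^2 * (∫ t in Set.Ioo a b, ‖w t‖^2) / 2 := by
      rw [MeasureTheory.integral_add
        (((heCont.norm.fun_pow 2).div_const 2).integrableOn_Icc.mono_set Set.Ioo_subset_Icc_self)
        (((continuous_const.fun_mul (hwCont.norm.fun_pow 2)).div_const 2).integrableOn_Icc.mono_set
          Set.Ioo_subset_Icc_self)]
      rw [MeasureTheory.integral_div]
      congr 1
      rw [show (fun t : ℝ => (lam*τ)^2 * ‖w t‖^2 / 2) = fun t : ℝ => ((lam*τ)^2/2) * ‖w t‖^2
        from funext fun t => by ring]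
      rw [MeasureTheory.integral_const_mul]
      ring
    have hneg : ∫ t in Set.Ioo a b, - lam * ((t - a) * (inner ℝ (e t) (w t) : ℝ))
        = - lam * ∫ t in Set.Ioo a b, (t - a) * (inner ℝ (e t) (w t) : ℝ) :=
      MeasureTheory.integral_const_mul _ _
    rw [hneg, hsplit] at hmono
    rw [hEident] at *
    linarith
  -- Legendre energy identity transferred
  have hLrel : (2*(q:ℝ)+1) * ∫ t in Set.Ioo a b, (L.eval t)^2 = τ * (L.eval a)^2 := by
    rw [ioo_eq_interval a b hab.le, hτ]
    exact legL_sq_integral q a b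
  have hIe : ∫ t in Set.Ioo a b, ‖e t‖^2 = (∫ t in Set.Ioo a b, (L.eval t)^2) * ‖c‖^2 := by
    rw [show (fun t => (‖e t‖:ℝ)^2) = fun t => (L.eval t)^2 * ‖c‖^2 from funext fun t => by
      rw [he_eq t, norm_smul, mul_pow, Real.norm_eq_abs, sq_abs]]
    exact MeasureTheory.integral_mul_const _ _
  have hIw_nonneg : 0 ≤ ∫ t in Set.Ioo a b, ‖w t‖^2 :=
    MeasureTheory.integral_nonneg fun t => sq_nonneg _
  -- pointwise value at a
  have hval : ‖e a‖^2 = (L.eval a)^2 * ‖c‖^2 := by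
    rw [he_eq a, norm_smul, mul_pow, Real.norm_eq_abs, sq_abs]
  have hchain : ‖e a‖^2 ≤ (2*(q:ℝ)+1) / τ * ((lam * τ)^2 * ∫ t in Set.Ioo a b, ‖w t‖^2) := by
    have h1 : ‖e a‖^2 = (2*(q:ℝ)+1) / τ * ∫ t in Set.Ioo a b, ‖e t‖^2 := by
      rw [hIe, hval, div_mul_eq_mul_div, eq_div_iff hτpos.ne']
      linear_combination (-(‖c‖^2)) * hLrel
    rw [h1]
    apply mul_le_mul_of_nonneg_left hEbound (by positivity)
  -- final algebra
  have hlamτ : lam * τ = ζq := by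
    rw [hlam]
    field_simp
  have hC2 : ((1 : ℝ) / (4 * Real.sqrt (2 * (q : ℝ) + 1) * Real.sqrt τ))^2
      = 1 / (16 * (2*(q:ℝ)+1) * τ) := by
    rw [div_pow, one_pow, mul_pow, mul_pow, Real.sq_sqrt h2q.le, Real.sq_sqrt hτpos.le]
    norm_num
  have hrhs : (2*(q:ℝ)+1) / τ * ((lam * τ)^2 * ∫ t in Set.Ioo a b, ‖w t‖^2)
      = ((1 : ℝ) / (4 * Real.sqrt (2 * (q : ℝ) + 1) * Real.sqrt τ))^2
        * ∫ t in Set.Ioo a b, ‖w t‖^2 := by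
    rw [hC2, hlamτ, hζ]
    field_simp
    ring
  rw [hrhs] at hchain
  have hCnn : 0 ≤ (1 : ℝ) / (4 * Real.sqrt (2 * (q : ℝ) + 1) * Real.sqrt τ) := by positivity
  have hfinal : ‖e a‖ ≤ (1 / (4 * Real.sqrt (2 * (q : ℝ) + 1) * Real.sqrt τ))
      * Real.sqrt (∫ t in Set.Ioo a b, ‖w t‖ ^ 2) := by
    have hsq : ((1 / (4 * Real.sqrt (2 * (q : ℝ) + 1) * Real.sqrt τ))
        * Real.sqrt (∫ t in Set.Ioo a b, ‖w t‖ ^ 2))^2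
        = (1 / (4 * Real.sqrt (2 * (q : ℝ) + 1) * Real.sqrt τ))^2
          * ∫ t in Set.Ioo a b, ‖w t‖^2 := by
      rw [mul_pow, Real.sq_sqrt hIw_nonneg]
    have := Real.sqrt_le_sqrt (hchain.trans_eq hsq.symm)
    rwa [Real.sqrt_sq (norm_nonneg _),
      Real.sqrt_sq (mul_nonneg hCnn (Real.sqrt_nonneg _))] at this
  exact hfinal
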